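/- Fix D > 0, α > 2, T ≥ 0, g > 0, an integer m ≥ 1 and b > 0. The function F(s) = ∫_0^D r · exp(s·g·r^{−α}·1{g·r^{−α} ≥ T}) dr is m-times differentiable on (−∞, 0), and its m-th derivative at s = −1/b equals (1/α)·g^{2/α}·b^{m − 2/α}·Γ(m − 2/α, (g/b)·max{D^{−α}, T/g}). -/

import Mathlib

open MeasureTheory
open Set Real Filter

/-- Upper incomplete gamma function `Γ(a, x) = ∫_x^∞ t^(a-1) e^(-t) dt`. -/
noncomputable def uGamma (a x : ℝ) : ℝ := ∫ t in Set.Ioi x, t ^ (a - 1) * Real.exp (-t)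

lemma uGamma_integrableOn (a : ℝ) {x : ℝ} (hx : 0 < x) :
    IntegrableOn (fun t : ℝ => t ^ (a - 1) * Real.exp (-t)) (Set.Ioi x) := by
  refine integrable_of_isBigO_exp_neg one_half_pos ?_ ?_
  · exact (continuousOn_id.rpow_const fun t ht => Or.inl (hx.trans_le ht).ne').mul
      continuousOn_id.neg.rexp
  · have h := (Real.Gamma_integrand_isLittleO (a - 1)).isBigO
    have e1 : (fun t : ℝ => t ^ (a - 1) * Real.exp (-t))
        = fun t : ℝ => Real.exp (-t) * t ^ (a - 1) := by ext t; ring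
    have e2 : (fun t : ℝ => Real.exp (-(1/2 : ℝ) * t))
        = fun t : ℝ => Real.exp (-(1 / 2) * t) := by norm_num
    rw [e1, e2]; exact h

lemma phi_continuousOn (a : ℝ) :
    ContinuousOn (fun t : ℝ => t ^ (a - 1) * Real.exp (-t)) (Set.Ioi 0) :=
  (continuousOn_id.rpow_const fun t ht => Or.inl (ne_of_gt ht)).mul
    continuousOn_id.neg.rexp

lemma uGamma_hasDerivAt (a : ℝ) {x : ℝ} (hx : 0 < x) :
    HasDerivAt (uGamma a) (-(x ^ (a - 1) * Real.exp (-x))) x := by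
  set φ : ℝ → ℝ := fun t => t ^ (a - 1) * Real.exp (-t) with hφ
  set c : ℝ := x / 2 with hc
  have hc0 : 0 < c := by positivity
  have hcx : c < x := by simp [hc]; linarith
  have hint : IntegrableOn φ (Set.Ioi c) := uGamma_integrableOn a hc0
  -- uGamma a y = uGamma a c - ∫ t in c..y, φ t  for y > c
  have key : ∀ y ∈ Set.Ioi c, uGamma a y = uGamma a c - ∫ t in c..y, φ t := by
    intro y hy
    have hy' : c ≤ y := le_of_lt hy
    have hsplit : (Set.Ioc c y) ∪ (Set.Ioi y) = Set.Ioi c := Set.Ioc_union_Ioi_eq_Ioi hy'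
    have hdisj : Disjoint (Set.Ioc c y) (Set.Ioi y) := by
      refine Set.disjoint_left.2 fun t ht ht' => ?_
      exact absurd ht.2 (not_le.2 ht')
    have h1 : IntegrableOn φ (Set.Ioc c y) := hint.mono_set Set.Ioc_subset_Ioi_self
    have h2 : IntegrableOn φ (Set.Ioi y) := hint.mono_set (Set.Ioi_subset_Ioi hy')
    have := MeasureTheory.setIntegral_union hdisj measurableSet_Ioi h1 h2
    rw [hsplit] at this
    rw [intervalIntegral.integral_of_le hy']
    show (∫ t in Set.Ioi y, φ t) = (∫ t in Set.Ioi c, φ t) - ∫ t in Set.Ioc c y, φ t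
    rw [this]; ring
  have hFTC : HasDerivAt (fun y => ∫ t in c..y, φ t) (φ x) x := by
    refine intervalIntegral.integral_hasDerivAt_right ?_ ?_ ?_
    · exact (intervalIntegrable_iff_integrableOn_Ioc_of_le hcx.le).2 (hint.mono_set Set.Ioc_subset_Ioi_self)
    · exact (phi_continuousOn a).stronglyMeasurableAtFilter isOpen_Ioi x hx
    · exact (phi_continuousOn a).continuousAt (Ioi_mem_nhds hx)
  have hev : (fun y => uGamma a c - ∫ t in c..y, φ t) =ᶠ[nhds x] uGamma a :=
    Filter.eventuallyEq_of_mem (Ioi_mem_nhds hcx) fun y hy => (key y hy).symm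
  have := ((hasDerivAt_const x (uGamma a c)).sub hFTC).congr_of_eventuallyEq hev.symm
  simpa using this

lemma uGamma_succ (a : ℝ) {x : ℝ} (hx : 0 < x) :
    uGamma (a + 1) x = a * uGamma a x + x ^ a * Real.exp (-x) := by
  have hderiv : ∀ t ∈ Set.Ici x, HasDerivAt (fun t : ℝ => -(t ^ a * Real.exp (-t)))
      (t ^ (a + 1 - 1) * Real.exp (-t) - a * (t ^ (a - 1) * Real.exp (-t))) t := by
    intro t ht
    have ht0 : t ≠ 0 := (hx.trans_le ht).ne'
    have h1 : HasDerivAt (fun t : ℝ => t ^ a) (a * t ^ (a - 1)) t :=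
      Real.hasDerivAt_rpow_const (Or.inl ht0)
    have h2 : HasDerivAt (fun t : ℝ => Real.exp (-t)) (-Real.exp (-t)) t := by
      simpa using ((hasDerivAt_id t).neg).exp
    have := (h1.mul h2).neg
    refine this.congr_deriv (Eq.symm ?_)
    ring_nf
  have htend : Tendsto (fun t : ℝ => -(t ^ a * Real.exp (-t))) atTop (nhds 0) := by
    have := (tendsto_rpow_mul_exp_neg_mul_atTop_nhds_zero a 1 one_pos).neg
    simpa using this
  have hint : IntegrableOn
      (fun t : ℝ => t ^ (a + 1 - 1) * Real.exp (-t) - a * (t ^ (a - 1) * Real.exp (-t)))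
      (Set.Ioi x) :=
    (uGamma_integrableOn (a + 1) hx).sub ((uGamma_integrableOn a hx).const_mul a)
  have := integral_Ioi_of_hasDerivAt_of_tendsto' hderiv hint htend
  rw [MeasureTheory.integral_sub (uGamma_integrableOn (a + 1) hx)
      ((uGamma_integrableOn a hx).const_mul a), MeasureTheory.integral_const_mul] at this
  have h3 : uGamma (a + 1) x - a * uGamma a x = x ^ a * Real.exp (-x) := by
    rw [uGamma, uGamma]; rw [this]; ring
  linarith

lemma hasDerivAt_H (a c : ℝ) (hc : 0 < c) {s : ℝ} (hs : s < 0) :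
    HasDerivAt (fun s : ℝ => (-s) ^ (-a) * uGamma a (-s * c))
      ((-s) ^ (-(a + 1)) * uGamma (a + 1) (-s * c)) s := by
  have hu : (0:ℝ) < -s := by linarith
  have hx : (0:ℝ) < -s * c := mul_pos hu hc
  have hinner : HasDerivAt (fun s : ℝ => -s * c) (-c) s := by
    simpa using ((hasDerivAt_id s).neg.mul_const c)
  have h1 : HasDerivAt (fun s : ℝ => (-s) ^ (-a)) ((-1) * (-a) * (-s) ^ (-a - 1)) s := by
    have := ((hasDerivAt_id s).neg).rpow_const (p := -a) (Or.inl hu.ne')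
    simpa using this
  have h2 : HasDerivAt (fun s : ℝ => uGamma a (-s * c))
      (-((-s * c) ^ (a - 1) * Real.exp (-(-s * c))) * (-c)) s := by
    have := (uGamma_hasDerivAt a hx).comp s hinner
    simpa [Function.comp_def] using this
  have h := h1.mul h2
  refine h.congr_deriv (Eq.symm ?_)
  rw [uGamma_succ a hx]
  rw [Real.mul_rpow hu.le hc.le, Real.mul_rpow hu.le hc.le]
  rw [show (-a-1 : ℝ) = -(a+1) from by ring]
  rw [show (-(a+1) : ℝ) = (-a) + (-1) from by ring, Real.rpow_add hu,
    Real.rpow_neg_one, Real.rpow_neg hu.le,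
    Real.rpow_sub hu, Real.rpow_sub hc, Real.rpow_one, Real.rpow_one]
  have hua : (-s) ^ a ≠ 0 := (Real.rpow_pos_of_pos hu a).ne'
  have hca : c ^ a ≠ 0 := (Real.rpow_pos_of_pos hc a).ne'
  have hcc : c * c⁻¹ = 1 := mul_inv_cancel₀ hc.ne'
  field_simp [hc.ne']
  ring

lemma closed_form {α g s r0 : ℝ} (hα : 0 < α) (hg : 0 < g) (hs : s < 0) (hr0 : 0 < r0) :
    ∫ r in (0:ℝ)..r0, r * Real.exp (s * g * r ^ (-α))
      = (1/α) * (((-s) * g) ^ (2/α) * uGamma (-(2/α)) ((-s) * g * (r0 ^ (-α)))) := by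
  have hu : (0:ℝ) < -s := by linarith
  set c : ℝ := (-s) * g with hc
  have hc0 : 0 < c := mul_pos hu hg
  set x0 : ℝ := r0 ^ (-α) with hx0def
  have hx0 : 0 < x0 := Real.rpow_pos_of_pos hr0 _
  set G : ℝ → ℝ := Set.indicator (Set.Ioi x0) (fun y => y ^ (-(2/α) - 1) * Real.exp (s * g * y))
    with hG
  -- Step A : rpow substitution
  have hp : (-α) ≠ 0 := neg_ne_zero.2 hα.ne'
  have subst := MeasureTheory.integral_comp_rpow_Ioi G hp
  -- LHS of subst
  have lhsA : (∫ x in Set.Ioi (0:ℝ), (|(-α)| * x ^ ((-α) - 1)) • G (x ^ (-α)))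
      = α * ∫ r in (0:ℝ)..r0, r * Real.exp (s * g * r ^ (-α)) := by
    have congr1 : Set.EqOn (fun x : ℝ => (|(-α)| * x ^ ((-α) - 1)) • G (x ^ (-α)))
        (Set.indicator (Set.Iio r0) (fun x => α * (x * Real.exp (s * g * x ^ (-α)))))
        (Set.Ioi (0:ℝ)) := by
      intro x hx
      have hxpos : (0:ℝ) < x := hx
      have hiff : x ^ (-α) ∈ Set.Ioi x0 ↔ x ∈ Set.Iio r0 := by
        simp only [Set.mem_Ioi, Set.mem_Iio, hx0def]
        constructor
        · intro h
          by_contra hcon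
          push_neg at hcon
          rcases eq_or_lt_of_le hcon with h1 | h1
          · rw [← h1] at h; exact lt_irrefl _ h
          · exact absurd (Real.rpow_lt_rpow_of_neg hr0 h1 (neg_neg_iff_pos.2 hα))
              (not_lt.2 h.le)
        · intro h
          exact Real.rpow_lt_rpow_of_neg hxpos h (neg_neg_iff_pos.2 hα)
      simp only [smul_eq_mul, hG]
      rcases em (x ∈ Set.Iio r0) with hmem | hmem
      · rw [Set.indicator_of_mem (hiff.2 hmem), Set.indicator_of_mem hmem]
        have e1 : (x ^ (-α)) ^ (-(2/α) - 1) = x ^ (2 + α) := by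
          rw [← Real.rpow_mul hxpos.le]
          rw [show (-α) * (-(2/α) - 1) = 2 + α from by field_simp; ring]
        rw [e1, abs_of_neg (neg_lt_zero.2 hα), neg_neg]
        have e2 : x ^ ((-α) - 1) * x ^ (2 + α) = x := by
          rw [← Real.rpow_add hxpos]
          rw [show (-α) - 1 + (2 + α) = (1:ℝ) from by ring, Real.rpow_one]
        calc α * x ^ ((-α) - 1) * (x ^ (2 + α) * Real.exp (s * g * x ^ (-α)))
            = α * (x ^ ((-α) - 1) * x ^ (2 + α)) * Real.exp (s * g * x ^ (-α)) := by ring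
          _ = α * (x * Real.exp (s * g * x ^ (-α))) := by rw [e2]; ring
      · rw [Set.indicator_of_notMem (fun hmm => hmem (hiff.1 hmm)),
            Set.indicator_of_notMem hmem, mul_zero]
    rw [MeasureTheory.setIntegral_congr_fun measurableSet_Ioi congr1]
    rw [MeasureTheory.integral_indicator measurableSet_Iio,
        Measure.restrict_restrict measurableSet_Iio]
    have : Set.Iio r0 ∩ Set.Ioi (0:ℝ) = Set.Ioo 0 r0 := by
      ext t; simp [Set.mem_Ioo, and_comm]
    rw [this, ← MeasureTheory.integral_Ioc_eq_integral_Ioo,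
        ← intervalIntegral.integral_of_le hr0.le, intervalIntegral.integral_const_mul]
  -- RHS of subst
  have rhsA : (∫ y in Set.Ioi (0:ℝ), G y)
      = ∫ y in Set.Ioi x0, y ^ (-(2/α) - 1) * Real.exp (s * g * y) := by
    rw [hG, MeasureTheory.integral_indicator measurableSet_Ioi,
        Measure.restrict_restrict measurableSet_Ioi]
    congr 1
    rw [Set.Ioi_inter_Ioi, max_eq_left hx0.le]
  -- Step B : linear substitution
  have stepB : (∫ y in Set.Ioi x0, y ^ (-(2/α) - 1) * Real.exp (s * g * y))
      = c ^ (2/α) * uGamma (-(2/α)) (c * x0) := by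
    have subst2 := MeasureTheory.integral_comp_mul_left_Ioi
      (fun t => t ^ (-(2/α) - 1) * Real.exp (-t)) x0 hc0
    have lhsB : (∫ y in Set.Ioi x0, (c * y) ^ (-(2/α) - 1) * Real.exp (-(c * y)))
        = c ^ (-(2/α) - 1) * ∫ y in Set.Ioi x0, y ^ (-(2/α) - 1) * Real.exp (s * g * y) := by
      rw [← MeasureTheory.integral_const_mul]
      refine MeasureTheory.setIntegral_congr_fun measurableSet_Ioi fun y hy => ?_
      have hy0 : (0:ℝ) < y := hx0.trans hy
      rw [Real.mul_rpow hc0.le hy0.le]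
      have : -(c * y) = s * g * y := by rw [hc]; ring
      rw [this]; ring
    rw [lhsB] at subst2
    have hcne : c ^ (-(2/α) - 1) ≠ 0 := (Real.rpow_pos_of_pos hc0 _).ne'
    have hug : uGamma (-(2/α)) (c * x0)
        = ∫ t in Set.Ioi (c * x0), t ^ (-(2/α) - 1) * Real.exp (-t) := by
      rw [uGamma]
    simp only [smul_eq_mul] at subst2
    have e4 : (c ^ (-(2/α) - 1))⁻¹ * c⁻¹ = c ^ (2/α) := by
      have h5 : (c ^ (-(2/α) - 1))⁻¹ = c ^ ((2/α) + 1) := by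
        rw [← Real.rpow_neg hc0.le]; congr 1; ring
      rw [h5, ← Real.rpow_neg_one c, ← Real.rpow_add hc0]; congr 1; ring
    rw [hug]
    calc (∫ y in Set.Ioi x0, y ^ (-(2/α) - 1) * Real.exp (s * g * y))
        = (c ^ (-(2/α) - 1))⁻¹ * (c ^ (-(2/α) - 1) *
            ∫ y in Set.Ioi x0, y ^ (-(2/α) - 1) * Real.exp (s * g * y)) := by
          rw [inv_mul_cancel_left₀ hcne]
      _ = (c ^ (-(2/α) - 1))⁻¹ * (c⁻¹ * ∫ t in Set.Ioi (c * x0),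
            t ^ (-(2/α) - 1) * Real.exp (-t)) := by rw [subst2]
      _ = c ^ (2/α) * ∫ t in Set.Ioi (c * x0), t ^ (-(2/α) - 1) * Real.exp (-t) := by
          rw [← mul_assoc, e4]
  -- combine
  rw [lhsA, rhsA, stepB] at subst
  rw [← subst]
  field_simp

lemma measurable_rpow_const (c : ℝ) : Measurable fun x : ℝ => x ^ c := by
  have h : (fun x : ℝ => x ^ c) = fun x =>
      if x = 0 then (if c = 0 then 1 else 0)
      else if 0 < x then Real.exp (Real.log x * c)
      else Real.exp (Real.log x * c) * Real.cos (c * Real.pi) := by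
    ext x
    rcases lt_trichotomy x 0 with hx | hx | hx
    · rw [if_neg hx.ne, if_neg (not_lt.2 hx.le), Real.rpow_def_of_neg hx]
    · subst hx
      rcases eq_or_ne c 0 with rfl | hc
      · simp
      · simp [Real.zero_rpow hc, hc]
    · rw [if_neg hx.ne', if_pos hx, Real.rpow_def_of_pos hx]
  rw [h]
  refine Measurable.ite (measurableSet_eq) measurable_const ?_
  refine Measurable.ite (measurableSet_lt measurable_const measurable_id) ?_ ?_
  · exact (Real.measurable_log.mul measurable_const).exp
  · exact ((Real.measurable_log.mul measurable_const).exp).mul measurable_const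

theorem stmt_9 (D α T g b : ℝ) (hD : 0 < D) (hα : 2 < α) (hT : 0 ≤ T) (hg : 0 < g)
    (m : ℕ) (hm : 1 ≤ m) (hb : 0 < b) :
    ContDiffOn ℝ m
      (fun s : ℝ => ∫ r in (0:ℝ)..D,
        r * Real.exp (s * g * r ^ (-α) * (if T ≤ g * r ^ (-α) then (1:ℝ) else 0)))
      (Set.Iio 0) ∧
    iteratedDerivWithin m
      (fun s : ℝ => ∫ r in (0:ℝ)..D,
        r * Real.exp (s * g * r ^ (-α) * (if T ≤ g * r ^ (-α) then (1:ℝ) else 0)))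
      (Set.Iio 0) (-1 / b)
      = (1 / α) * g ^ (2 / α) * b ^ ((m : ℝ) - 2 / α) *
          uGamma ((m : ℝ) - 2 / α) ((g / b) * max (D ^ (-α)) (T / g)) := by
  have hα0 : (0:ℝ) < α := by linarith
  have hαne : α ≠ 0 := hα0.ne'
  set x0 : ℝ := max (D ^ (-α)) (T / g) with hx0def
  have hDα : (0:ℝ) < D ^ (-α) := Real.rpow_pos_of_pos hD _
  have hx0 : 0 < x0 := lt_of_lt_of_le hDα (le_max_left _ _)
  have hTg : T / g ≤ x0 := le_max_right _ _
  set r0 : ℝ := x0 ^ (-α⁻¹) with hr0def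
  have hr0 : 0 < r0 := Real.rpow_pos_of_pos hx0 _
  have hr0α : r0 ^ (-α) = x0 := by
    rw [hr0def, ← Real.rpow_mul hx0.le]
    rw [show -α⁻¹ * -α = α⁻¹ * α from by ring, inv_mul_cancel₀ hαne, Real.rpow_one]
  have hDr0 : (D ^ (-α)) ^ (-α⁻¹) = D := by
    rw [← Real.rpow_mul hD.le, show -α * -α⁻¹ = α * α⁻¹ from by ring,
      mul_inv_cancel₀ hαne, Real.rpow_one]
  have hr0D : r0 ≤ D := by
    calc r0 = x0 ^ (-α⁻¹) := hr0def
      _ ≤ (D ^ (-α)) ^ (-α⁻¹) := Real.rpow_le_rpow_of_nonpos hDα (le_max_left _ _)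
          (by rw [neg_nonpos]; positivity)
      _ = D := hDr0
  set c : ℝ := g * x0 with hcdef
  have hc0 : 0 < c := mul_pos hg hx0
  set K : ℝ := 1 / α * g ^ (2/α) with hKdef
  set F : ℝ → ℝ := fun s : ℝ => ∫ r in (0:ℝ)..D,
      r * Real.exp (s * g * r ^ (-α) * (if T ≤ g * r ^ (-α) then (1:ℝ) else 0)) with hFdef
  set CC : ℝ := (D^2 - r0^2)/2 with hCCdef
  -- measurability of the integrand
  have hmeas : ∀ s : ℝ, Measurable (fun r : ℝ =>
      r * Real.exp (s * g * r ^ (-α) * (if T ≤ g * r ^ (-α) then (1:ℝ) else 0))) := by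
    intro s
    have h1 : Measurable (fun r : ℝ => g * r ^ (-α)) :=
      (measurable_rpow_const (-α)).const_mul g
    have hset : MeasurableSet {r : ℝ | T ≤ g * r ^ (-α)} := measurableSet_le measurable_const h1
    have h2 : Measurable (fun r : ℝ => (if T ≤ g * r ^ (-α) then (1:ℝ) else 0)) :=
      Measurable.ite hset measurable_const measurable_const
    exact measurable_id.mul
      ((((measurable_rpow_const (-α)).const_mul (s * g)).mul h2).exp)
  -- integrability on subintervals of [0, D]
  have hfint : ∀ s : ℝ, s < 0 → ∀ u v : ℝ, 0 ≤ u → u ≤ v →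
      IntervalIntegrable (fun r : ℝ =>
        r * Real.exp (s * g * r ^ (-α) * (if T ≤ g * r ^ (-α) then (1:ℝ) else 0)))
        volume u v := by
    intro s hs u v hu huv
    rw [intervalIntegrable_iff_integrableOn_Ioc_of_le huv]
    refine MeasureTheory.Integrable.mono' (MeasureTheory.integrable_const v)
      ((hmeas s).aestronglyMeasurable.restrict) ?_
    filter_upwards [MeasureTheory.ae_restrict_mem measurableSet_Ioc] with r hr
    have hrpos : 0 < r := lt_of_le_of_lt hu hr.1
    have hE : s * g * r ^ (-α) * (if T ≤ g * r ^ (-α) then (1:ℝ) else 0) ≤ 0 := by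
      have h3 : (0:ℝ) < r ^ (-α) := Real.rpow_pos_of_pos hrpos _
      split_ifs
      · nlinarith
      · simp
    have hle1 : Real.exp (s * g * r ^ (-α) * (if T ≤ g * r ^ (-α) then (1:ℝ) else 0)) ≤ 1 :=
      Real.exp_le_one_iff.2 hE
    have hexpos := Real.exp_pos (s * g * r ^ (-α) * (if T ≤ g * r ^ (-α) then (1:ℝ) else 0))
    rw [Real.norm_eq_abs, abs_of_nonneg (mul_nonneg hrpos.le hexpos.le)]
    nlinarith [hr.2]
  -- the closed form of F on (-∞, 0)
  have heqon : ∀ s : ℝ, s < 0 →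
      F s = CC + K * ((-s) ^ (-(-(2/α))) * uGamma (-(2/α)) (-s * c)) := by
    intro s hs
    have hI1 := hfint s hs 0 r0 le_rfl hr0.le
    have hI2 := hfint s hs r0 D hr0.le hr0D
    have hsplit := intervalIntegral.integral_add_adjacent_intervals hI1 hI2
    have hpiece1 : (∫ r in (0:ℝ)..r0,
        r * Real.exp (s * g * r ^ (-α) * (if T ≤ g * r ^ (-α) then (1:ℝ) else 0)))
        = ∫ r in (0:ℝ)..r0, r * Real.exp (s * g * r ^ (-α)) := by
      apply intervalIntegral.integral_congr
      intro r hr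
      rw [Set.uIcc_of_le hr0.le] at hr
      rcases eq_or_lt_of_le hr.1 with h0 | h0
      · rw [← h0]; simp
      · have h4 : x0 ≤ r ^ (-α) := by
          rw [← hr0α]
          exact Real.rpow_le_rpow_of_nonpos h0 hr.2 (by rw [neg_nonpos]; positivity)
        have hind : T ≤ g * r ^ (-α) := by
          calc T = g * (T/g) := by field_simp
            _ ≤ g * x0 := mul_le_mul_of_nonneg_left hTg hg.le
            _ ≤ g * r ^ (-α) := mul_le_mul_of_nonneg_left h4 hg.le
        simp only [if_pos hind, mul_one]
    rw [closed_form hα0 hg hs hr0, hr0α] at hpiece1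
    have hpiece2 : (∫ r in r0..D,
        r * Real.exp (s * g * r ^ (-α) * (if T ≤ g * r ^ (-α) then (1:ℝ) else 0)))
        = CC := by
      rcases le_or_gt (T/g) (D ^ (-α)) with hcase | hcase
      · have hx0eq : x0 = D ^ (-α) := max_eq_left hcase
        have hr0eq : r0 = D := by rw [hr0def, hx0eq, hDr0]
        rw [hr0eq, intervalIntegral.integral_same, hCCdef, hr0eq]; ring
      · have hx0eq : x0 = T / g := max_eq_right hcase.le
        rw [intervalIntegral.integral_of_le hr0D]
        have hEq : Set.EqOn (fun r : ℝ =>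
            r * Real.exp (s * g * r ^ (-α) * (if T ≤ g * r ^ (-α) then (1:ℝ) else 0)))
            (fun r : ℝ => r) (Set.Ioc r0 D) := by
          intro r hr
          have h5 : r ^ (-α) < x0 := by
            rw [← hr0α]
            exact Real.rpow_lt_rpow_of_neg hr0 hr.1 (neg_neg_iff_pos.2 hα0)
          have hind : ¬ (T ≤ g * r ^ (-α)) := by
            push_neg
            calc g * r ^ (-α) < g * x0 := mul_lt_mul_of_pos_left h5 hg
              _ = T := by rw [hx0eq]; field_simp
          simp only [if_neg hind, mul_zero, Real.exp_zero, mul_one]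
        rw [MeasureTheory.setIntegral_congr_fun measurableSet_Ioc hEq,
          ← intervalIntegral.integral_of_le hr0D, integral_id]
    have hFs : F s = (∫ r in (0:ℝ)..r0,
        r * Real.exp (s * g * r ^ (-α) * (if T ≤ g * r ^ (-α) then (1:ℝ) else 0)))
        + ∫ r in r0..D,
        r * Real.exp (s * g * r ^ (-α) * (if T ≤ g * r ^ (-α) then (1:ℝ) else 0)) := by
      rw [hFdef]; exact hsplit.symm
    rw [hFs, hpiece1, hpiece2]
    have hmul : ((-s) * g) ^ (2/α) = (-s) ^ (2/α) * g ^ (2/α) :=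
      Real.mul_rpow (by linarith) hg.le
    rw [hmul, neg_neg, hKdef]
    rw [show (-s) * g * x0 = -s * c from by rw [hcdef]; ring]
    ring
  -- derivative of the model function
  have hQd : ∀ (a : ℝ) (s : ℝ), s < 0 →
      HasDerivAt (fun s : ℝ => K * ((-s) ^ (-a) * uGamma a (-s * c)))
        (K * ((-s) ^ (-(a+1)) * uGamma (a+1) (-s * c))) s := by
    intro a s hs
    exact (hasDerivAt_H a c hc0 hs).const_mul K
  -- iterated derivatives of F
  have main : ∀ k : ℕ, ∀ s : ℝ, s < 0 → iteratedDerivWithin (k+1) F (Set.Iio 0) s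
      = K * ((-s) ^ (-((-(2/α)) + ((k:ℝ)+1))) * uGamma ((-(2/α)) + ((k:ℝ)+1)) (-s * c)) := by
    intro k
    induction k with
    | zero =>
      intro s hs
      have hUD : UniqueDiffWithinAt ℝ (Set.Iio (0:ℝ)) s := isOpen_Iio.uniqueDiffWithinAt hs
      rw [iteratedDerivWithin_one, derivWithin_of_isOpen isOpen_Iio hs]
      have hev : F =ᶠ[nhds s]
          (fun s => CC + K * ((-s) ^ (-(-(2/α))) * uGamma (-(2/α)) (-s * c))) :=
        Filter.eventuallyEq_of_mem (isOpen_Iio.mem_nhds hs) (fun x hx => heqon x hx)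
      have hd := ((hasDerivAt_const s CC).add (hQd (-(2/α)) s hs)).congr_of_eventuallyEq hev
      rw [hd.deriv, show (-(2/α) : ℝ) + 1 = -(2/α) + (((0:ℕ):ℝ)+1) from by norm_num]
      ring
    | succ k ih =>
      intro s hs
      have hUD : UniqueDiffWithinAt ℝ (Set.Iio (0:ℝ)) s := isOpen_Iio.uniqueDiffWithinAt hs
      rw [iteratedDerivWithin_succ, derivWithin_of_isOpen isOpen_Iio hs]
      have hev : iteratedDerivWithin (k+1) F (Set.Iio 0) =ᶠ[nhds s]
          (fun s => K * ((-s) ^ (-((-(2/α)) + ((k:ℝ)+1))) *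
            uGamma ((-(2/α)) + ((k:ℝ)+1)) (-s * c))) :=
        Filter.eventuallyEq_of_mem (isOpen_Iio.mem_nhds hs) (fun x hx => ih x hx)
      have hd := (hQd ((-(2/α)) + ((k:ℝ)+1)) s hs).congr_of_eventuallyEq hev
      rw [hd.deriv, show ((-(2/α)) + ((k:ℝ)+1)) + 1 = -(2/α) + ((((k+1):ℕ):ℝ)+1) from by
        push_cast; ring]
  constructor
  · refine contDiffOn_of_differentiableOn_deriv ?_
    intro i _
    cases i with
    | zero =>
      rw [iteratedDerivWithin_zero]
      intro s hs
      have hev : F =ᶠ[nhds s]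
          (fun s => CC + K * ((-s) ^ (-(-(2/α))) * uGamma (-(2/α)) (-s * c))) :=
        Filter.eventuallyEq_of_mem (isOpen_Iio.mem_nhds hs) (fun x hx => heqon x hx)
      exact (((hasDerivAt_const s CC).add
        (hQd (-(2/α)) s hs)).congr_of_eventuallyEq hev).differentiableAt.differentiableWithinAt
    | succ j =>
      intro s hs
      have hev : iteratedDerivWithin (j+1) F (Set.Iio 0) =ᶠ[nhds s]
          (fun s => K * ((-s) ^ (-((-(2/α)) + ((j:ℝ)+1))) *
            uGamma ((-(2/α)) + ((j:ℝ)+1)) (-s * c))) :=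
        Filter.eventuallyEq_of_mem (isOpen_Iio.mem_nhds hs) (fun x hx => main j x hx)
      exact ((hQd ((-(2/α)) + ((j:ℝ)+1)) s
        hs).congr_of_eventuallyEq hev).differentiableAt.differentiableWithinAt
  · obtain ⟨k, rfl⟩ : ∃ k : ℕ, m = k + 1 := ⟨m - 1, (Nat.succ_pred_eq_of_pos hm).symm⟩
    have hsb : (-1 : ℝ)/b < 0 := div_neg_of_neg_of_pos (by norm_num) hb
    rw [main k _ hsb]
    rw [show (-(-1/b) : ℝ) = b⁻¹ from by field_simp]
    rw [show (-(2/α)) + ((k:ℝ)+1) = (((k+1:ℕ)):ℝ) - 2/α from by push_cast; ring]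
    rw [show (b⁻¹) ^ (-((((k+1:ℕ)):ℝ) - 2/α)) = b ^ ((((k+1:ℕ)):ℝ) - 2/α) from by
      rw [Real.inv_rpow hb.le, Real.rpow_neg hb.le, inv_inv]]
    rw [show (b⁻¹ * c : ℝ) = g / b * x0 from by rw [hcdef]; ring]
    ring
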